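/- For all integers l, m ≥ 0 with l + m ≥ 1, there exist complex numbers a and b such that ᵗΞ(l,m)·Ξ(l,m) − ᵗΞ(m,l)·Ξ(m,l) = [[a, b], [b, −a]], where ᵗA denotes the transpose of A. -/
import Mathlib


noncomputable section
open Matrix Finset

/-- `P = (1/√2)·[[1,1],[0,0]]` -/
def matP : Matrix (Fin 2) (Fin 2) ℂ := (Real.sqrt 2 : ℂ)⁻¹ • !![1, 1; 0, 0]

/-- `Q = (1/√2)·[[0,0],[1,-1]]` -/
def matQ : Matrix (Fin 2) (Fin 2) ℂ := (Real.sqrt 2 : ℂ)⁻¹ • !![0, 0; 1, -1]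

/-- `R = (1/√2)·[[1,-1],[0,0]]` -/
def matR : Matrix (Fin 2) (Fin 2) ℂ := (Real.sqrt 2 : ℂ)⁻¹ • !![1, -1; 0, 0]

/-- `S = (1/√2)·[[0,0],[1,1]]` -/
def matS : Matrix (Fin 2) (Fin 2) ℂ := (Real.sqrt 2 : ℂ)⁻¹ • !![0, 0; 1, 1]

/-- `Ξ(l,m)`: the sum, over all words of length `l+m` over the alphabet `{P,Q}` with exactly
`l` letters `P` and `m` letters `Q` (a word being encoded by the set `s` of positions of its
letters `P`), of the ordered matrix product of the letters of the word. -/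
def Xi (l m : ℕ) : Matrix (Fin 2) (Fin 2) ℂ :=
  ∑ s ∈ (Finset.univ : Finset (Fin (l + m))).powersetCard l,
    (List.ofFn (fun i : Fin (l + m) => if i ∈ s then matP else matQ)).prod

/-- The rotation `T = [[0,1],[-1,0]]`. -/
def matT : Matrix (Fin 2) (Fin 2) ℂ := !![0, 1; -1, 0]

/-- `T⁻¹ = [[0,-1],[1,0]]`. -/
def matTi : Matrix (Fin 2) (Fin 2) ℂ := !![0, -1; 1, 0]

lemma TTi : matT * matTi = 1 := by
  ext i j; fin_cases i <;> fin_cases j <;>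
    simp [matT, matTi, Matrix.mul_apply, Fin.sum_univ_two]

lemma TiT : matTi * matT = 1 := by
  ext i j; fin_cases i <;> fin_cases j <;>
    simp [matT, matTi, Matrix.mul_apply, Fin.sum_univ_two]

lemma T_transpose : matTᵀ = matTi := by
  ext i j; fin_cases i <;> fin_cases j <;> simp [matT, matTi]

lemma Ti_transpose : matTiᵀ = matT := by
  ext i j; fin_cases i <;> fin_cases j <;> simp [matT, matTi]

lemma TPTi : matT * matP * matTi = (-1 : ℂ) • matQ := by
  ext i j; fin_cases i <;> fin_cases j <;>
    simp [matT, matTi, matP, matQ, Matrix.mul_apply, Fin.sum_univ_two]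

lemma TQTi : matT * matQ * matTi = (-1 : ℂ) • matP := by
  ext i j; fin_cases i <;> fin_cases j <;>
    simp [matT, matTi, matP, matQ, Matrix.mul_apply, Fin.sum_univ_two]

lemma conj_word : ∀ (n : ℕ) (g : Fin n → Bool),
    matT * (List.ofFn (fun i => if g i then matP else matQ)).prod * matTi
      = (-1 : ℂ) ^ n • (List.ofFn (fun i => if g i then matQ else matP)).prod := by
  intro n
  induction n with
  | zero => intro g; simp [TTi]
  | succ k ih =>
    intro g
    rw [List.ofFn_succ, List.ofFn_succ, List.prod_cons, List.prod_cons]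
    have h1 : matT * ((if g 0 then matP else matQ) *
        (List.ofFn fun i : Fin k => if g i.succ then matP else matQ).prod) * matTi
        = (matT * (if g 0 then matP else matQ) * matTi) *
          (matT * (List.ofFn fun i : Fin k => if g i.succ then matP else matQ).prod * matTi) := by
      simp only [Matrix.mul_assoc]
      rw [← Matrix.mul_assoc matTi matT, TiT, Matrix.one_mul]
    rw [h1, ih (fun i => g i.succ)]
    by_cases hg : g 0 = true <;>
      simp [hg, TPTi, TQTi, Matrix.smul_mul, Matrix.mul_smul, smul_smul, pow_succ]

lemma conj_word' (n : ℕ) (p : Fin n → Prop) [DecidablePred p] :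
    matT * (List.ofFn (fun i => if p i then matP else matQ)).prod * matTi
      = (-1 : ℂ) ^ n • (List.ofFn (fun i => if p i then matQ else matP)).prod := by
  have := conj_word n (fun i => decide (p i))
  simpa using this

lemma sum_swap_words (l m : ℕ) :
    ∑ s ∈ (Finset.univ : Finset (Fin (l + m))).powersetCard l,
      (List.ofFn (fun i : Fin (l + m) => if i ∈ s then matQ else matP)).prod
    = ∑ t ∈ (Finset.univ : Finset (Fin (m + l))).powersetCard m,
      (List.ofFn (fun i : Fin (m + l) => if i ∈ t then matP else matQ)).prod := by
  refine Finset.sum_nbij'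
    (fun s => sᶜ.map (finCongr (Nat.add_comm l m)).toEmbedding)
    (fun t => tᶜ.map (finCongr (Nat.add_comm m l)).toEmbedding) ?_ ?_ ?_ ?_ ?_
  · intro s hs
    rw [Finset.mem_powersetCard_univ] at hs ⊢
    rw [Finset.card_map, Finset.card_compl, hs]
    simp
  · intro t ht
    rw [Finset.mem_powersetCard_univ] at ht ⊢
    rw [Finset.card_map, Finset.card_compl, ht]
    simp
  · intro s _
    ext a
    simp [Finset.mem_map_equiv]
  · intro t _
    ext a
    simp [Finset.mem_map_equiv]
  · intro s _
    congr 1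
    apply List.ext_getElem
    · simp; omega
    · intro k h1 h2
      simp only [List.getElem_ofFn]
      have : (⟨k, by simpa using h2⟩ : Fin (m + l)) ∈ sᶜ.map (finCongr (Nat.add_comm l m)).toEmbedding
          ↔ ¬ ((⟨k, by simpa using h1⟩ : Fin (l + m)) ∈ s) := by
        simp [Finset.mem_map_equiv, Fin.ext_iff]
      by_cases hk : (⟨k, by simpa using h1⟩ : Fin (l + m)) ∈ s
      · simp_all
      · simp_all

lemma Xi_swap (l m : ℕ) :
    matT * Xi l m * matTi = (-1 : ℂ) ^ (l + m) • Xi m l := by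
  unfold Xi
  rw [Finset.mul_sum, Finset.sum_mul]
  rw [Finset.sum_congr rfl (fun s _ => conj_word' (l + m) (fun i => i ∈ s))]
  rw [← Finset.smul_sum, sum_swap_words]

lemma Xi_swap' (l m : ℕ) :
    Xi m l = (-1 : ℂ) ^ (l + m) • (matT * Xi l m * matTi) := by
  rw [Xi_swap, smul_smul, ← pow_add, Even.neg_one_pow ⟨l + m, rfl⟩, one_smul]

theorem xi_difference_form (l m : ℕ) (hlm : 1 ≤ l + m) :
    ∃ a b : ℂ, (Xi l m)ᵀ * Xi l m - (Xi m l)ᵀ * Xi m l = !![a, b; b, -a] := by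
  set A := (Xi l m)ᵀ * Xi l m with hA
  have key : (Xi m l)ᵀ * Xi m l = matT * A * matTi := by
    rw [Xi_swap' l m, Matrix.transpose_smul, Matrix.smul_mul, Matrix.mul_smul, smul_smul,
      ← pow_add, Even.neg_one_pow ⟨l + m, rfl⟩, one_smul]
    rw [Matrix.transpose_mul, Matrix.transpose_mul, T_transpose, Ti_transpose]
    simp only [Matrix.mul_assoc]
    rw [← Matrix.mul_assoc matTi matT, TiT, Matrix.one_mul, hA]
    simp only [Matrix.mul_assoc]
  refine ⟨A 0 0 - A 1 1, A 0 1 + A 1 0, ?_⟩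
  rw [key]
  ext i j
  fin_cases i <;> fin_cases j <;>
    simp only [Matrix.sub_apply, Matrix.mul_apply, Fin.sum_univ_two, matT, matTi,
      Matrix.of_apply, Matrix.cons_val', Matrix.cons_val_zero, Matrix.cons_val_one,
      Matrix.head_cons, Matrix.head_fin_const, Matrix.empty_val',
      Matrix.cons_val_fin_one] <;>
    (try simp [Fin.mk_zero, Fin.mk_one]) <;> (try ring)
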